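/- arXiv:2509.25473 — 2 statements merged into one kernel-verified Lean document; each statement's English description precedes it below -/
import Mathlib

section
/- For exchangeable real-valued scores E₁, …, Eₙ, E_{n+1}, if τ is the ⌈(1-α)(n+1)⌉-th smallest value among E₁, …, Eₙ (assuming ⌈(1-α)(n+1)⌉ ≤ n), then P(E_{n+1} ≤ τ) ≥ 1 - α. -/
open MeasureTheory

/-- The `r`-th smallest value (order statistic of rank `r`) of `f : Fin n → ℝ`,
defined as the least `x` such that at least `r` of the values are `≤ x`. -/
noncomputable def orderStat {n : ℕ} (r : ℕ) (f : Fin n → ℝ) : ℝ :=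
  sInf {x : ℝ | r ≤ (Finset.univ.filter (fun i => f i ≤ x)).card}

section OrderStatAux
open Finset ENNReal

variable {n r : ℕ}

lemma osSet_nonempty (hr : 0 < r) (hrn : r ≤ n) (f : Fin n → ℝ) :
    {x : ℝ | r ≤ (Finset.univ.filter (fun i => f i ≤ x)).card}.Nonempty := by
  have hn : 0 < n := lt_of_lt_of_le hr hrn
  have hne : (univ : Finset (Fin n)).Nonempty := (by have := Fin.pos_iff_nonempty.mp hn; exact univ_nonempty)
  refine ⟨univ.sup' hne f, ?_⟩
  have heq : univ.filter (fun i => f i ≤ univ.sup' hne f) = univ :=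
    Finset.filter_true_of_mem fun i _ => le_sup' f (mem_univ i)
  simp only [Set.mem_setOf_eq, heq, card_univ, Fintype.card_fin]
  exact hrn

lemma osSet_bddBelow (hr : 0 < r) (hrn : r ≤ n) (f : Fin n → ℝ) :
    BddBelow {x : ℝ | r ≤ (Finset.univ.filter (fun i => f i ≤ x)).card} := by
  have hn : 0 < n := lt_of_lt_of_le hr hrn
  have hne : (univ : Finset (Fin n)).Nonempty := (by have := Fin.pos_iff_nonempty.mp hn; exact univ_nonempty)
  refine ⟨univ.inf' hne f, fun x hx => ?_⟩
  simp only [Set.mem_setOf_eq] at hx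
  have hfne : (univ.filter (fun i => f i ≤ x)).Nonempty := by
    rw [← card_pos]; exact lt_of_lt_of_le hr hx
  obtain ⟨i, hi⟩ := hfne
  simp only [mem_filter] at hi
  exact le_trans (inf'_le f (mem_univ i)) hi.2

lemma card_le_orderStat (hr : 0 < r) (hrn : r ≤ n) (f : Fin n → ℝ) :
    r ≤ (univ.filter (fun i => f i ≤ orderStat r f)).card := by
  classical
  by_contra h
  push_neg at h
  set t := orderStat r f with ht
  have hU : (univ.filter (fun i => t < f i)).Nonempty := by
    by_contra h0
    rw [Finset.not_nonempty_iff_eq_empty] at h0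
    have heq : univ.filter (fun i => f i ≤ t) = univ := by
      refine Finset.filter_true_of_mem fun i _ => ?_
      by_contra hlt
      push_neg at hlt
      have : i ∈ univ.filter (fun i => t < f i) := by simp [hlt]
      simp [h0] at this
    rw [heq, card_univ, Fintype.card_fin] at h
    exact absurd hrn (not_le.mpr h)
  obtain ⟨i₀, hi₀mem, hi₀⟩ := exists_mem_eq_inf' hU f
  have hti₀ : t < f i₀ := (mem_filter.mp hi₀mem).2
  have hlb : ∀ x ∈ {x : ℝ | r ≤ (univ.filter (fun i => f i ≤ x)).card}, f i₀ ≤ x := by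
    intro x hx
    simp only [Set.mem_setOf_eq] at hx
    have hcard : (univ.filter (fun i => f i ≤ t)).card <
        (univ.filter (fun i => f i ≤ x)).card := lt_of_lt_of_le h hx
    have hns : ¬ (univ.filter (fun i => f i ≤ x) ⊆ univ.filter (fun i => f i ≤ t)) :=
      fun hsub => absurd (card_le_card hsub) (not_le.mpr hcard)
    obtain ⟨j, hjx, hjt⟩ := Finset.not_subset.mp hns
    simp only [mem_filter, mem_univ, true_and, not_le] at hjx hjt
    have hjU : j ∈ univ.filter (fun i => t < f i) := by
      simp only [mem_filter, mem_univ, true_and]; exact hjt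
    calc f i₀ = (univ.filter (fun i => t < f i)).inf' hU f := hi₀.symm
      _ ≤ f j := inf'_le f hjU
      _ ≤ x := hjx
  exact absurd (le_csInf (osSet_nonempty hr hrn f) hlb) (not_le.mpr hti₀)

lemma card_lt_orderStat (hr : 0 < r) (hrn : r ≤ n) (f : Fin n → ℝ) :
    (univ.filter (fun i => f i < orderStat r f)).card < r := by
  classical
  by_contra h
  push_neg at h
  set t := orderStat r f with ht
  have hV : (univ.filter (fun i => f i < t)).Nonempty := by
    rw [← card_pos]; exact lt_of_lt_of_le hr h
  obtain ⟨i₀, hi₀mem, hi₀⟩ := exists_mem_eq_sup' hV f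
  have hxt : f i₀ < t := (mem_filter.mp hi₀mem).2
  have hmem : f i₀ ∈ {x : ℝ | r ≤ (univ.filter (fun i => f i ≤ x)).card} := by
    simp only [Set.mem_setOf_eq]
    refine le_trans h (card_le_card ?_)
    intro j hj
    simp only [mem_filter, mem_univ, true_and] at hj ⊢
    rw [← hi₀]
    exact le_sup' f (by simp only [mem_filter, mem_univ, true_and]; exact hj)
  exact absurd (csInf_le (osSet_bddBelow hr hrn f) hmem) (not_le.mpr hxt)

lemma le_orderStat_iff (hr : 0 < r) (hrn : r ≤ n) (f : Fin n → ℝ) (e : ℝ) :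
    e ≤ orderStat r f ↔ (univ.filter (fun i => f i < e)).card < r := by
  classical
  constructor
  · intro he
    calc (univ.filter (fun i => f i < e)).card
        ≤ (univ.filter (fun i => f i < orderStat r f)).card := by
          refine card_le_card (fun j hj => ?_)
          simp only [mem_filter, mem_univ, true_and] at hj ⊢
          exact lt_of_lt_of_le hj he
      _ < r := card_lt_orderStat hr hrn f
  · intro h
    refine le_csInf (osSet_nonempty hr hrn f) (fun x hx => ?_)
    simp only [Set.mem_setOf_eq] at hx
    by_contra hxe
    push_neg at hxe
    have hsub : univ.filter (fun i => f i ≤ x) ⊆ univ.filter (fun i => f i < e) := by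
      intro j hj
      simp only [mem_filter, mem_univ, true_and] at hj ⊢
      exact lt_of_le_of_lt hj hxe
    exact absurd (le_trans hx (card_le_card hsub)) (not_le.mpr h)

lemma rank_count (hr : 0 < r) {m : ℕ} (hrm : r ≤ m) (g : Fin m → ℝ) :
    r ≤ (univ.filter (fun j => (univ.filter (fun i => g i < g j)).card < r)).card := by
  classical
  refine le_trans (card_le_orderStat hr hrm g) (card_le_card ?_)
  intro j hj
  simp only [mem_filter, mem_univ, true_and] at hj ⊢
  calc (univ.filter (fun i => g i < g j)).card
      ≤ (univ.filter (fun i => g i < orderStat r g)).card := by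
        refine card_le_card (fun k hk => ?_)
        simp only [mem_filter, mem_univ, true_and] at hk ⊢
        exact lt_of_lt_of_le hk hj
    _ < r := card_lt_orderStat hr hrm g

lemma card_filter_comp_equiv {ι : Type*} [Fintype ι] [DecidableEq ι] (σ : Equiv.Perm ι)
    (p : ι → Prop) [DecidablePred p] :
    (univ.filter (fun i => p (σ i))).card = (univ.filter p).card := by
  rw [Finset.card_filter, Finset.card_filter]
  exact Fintype.sum_equiv σ _ _ (fun i => rfl)

end OrderStatAux

open Finset ENNReal in
/-- split conformal coverage guarantee.  If `E 0, …, E n` are exchangeable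
real-valued scores and `τ` is the `⌈(1-α)(n+1)⌉`-th smallest value among the first `n`
scores (with `⌈(1-α)(n+1)⌉ ≤ n`), then `P(E_{n+1} ≤ τ) ≥ 1 - α`. -/
theorem split_conformal_coverage {Ω : Type*} [MeasurableSpace Ω]
    (P : Measure Ω) [IsProbabilityMeasure P]
    (n : ℕ) (hn : 0 < n) (E : Fin (n + 1) → Ω → ℝ) (hmeas : ∀ i, Measurable (E i))
    (hexch : ∀ σ : Equiv.Perm (Fin (n + 1)),
      Measure.map (fun ω => fun i => E (σ i) ω) P = Measure.map (fun ω => fun i => E i ω) P)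
    (α : ℝ) (hα : 0 < α ∧ α < 1)
    (r : ℕ) (hr : r = ⌈(1 - α) * (n + 1)⌉₊) (hrn : r ≤ n)
    (τ : Ω → ℝ) (hτ : ∀ ω, τ ω = orderStat r (fun i : Fin n => E i.castSucc ω)) :
    ENNReal.ofReal (1 - α) ≤ P {ω | E (Fin.last n) ω ≤ τ ω} := by
  classical
  obtain ⟨hα0, hα1⟩ := hα
  have hα1' : (0:ℝ) ≤ 1 - α := by linarith
  have hr1 : 0 < r := by
    rw [hr]
    refine Nat.ceil_pos.mpr ?_
    have h1 : (0:ℝ) < 1 - α := by linarith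
    positivity
  have hrm : r ≤ n + 1 := le_trans hrn (Nat.le_succ n)
  set A : Fin (n+1) → Set Ω :=
    fun j => {ω | (univ.filter (fun i => E i ω < E j ω)).card < r} with hA
  have hAmem : ∀ j ω, ω ∈ A j ↔ (univ.filter (fun i => E i ω < E j ω)).card < r :=
    fun j ω => Iff.rfl
  have hAmeas : ∀ j, MeasurableSet (A j) := by
    intro j
    have hcm : Measurable (fun ω => (univ.filter (fun i => E i ω < E j ω)).card) := by
      have heq : (fun ω => (univ.filter (fun i => E i ω < E j ω)).card)
          = fun ω => ∑ i, if E i ω < E j ω then 1 else 0 := by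
        funext ω; rw [Finset.card_filter]
      rw [heq]
      exact Finset.measurable_sum _ (fun i _ =>
        Measurable.ite (measurableSet_lt (hmeas i) (hmeas j)) measurable_const
          measurable_const)
    exact hcm measurableSet_Iio
  have hFmeas : Measurable (fun ω => fun i => E i ω) :=
    measurable_pi_lambda _ hmeas
  set B : Set (Fin (n+1) → ℝ) :=
    {f | (univ.filter (fun i => f i < f (Fin.last n))).card < r} with hB
  have hBmeas : MeasurableSet B := by
    have hcm : Measurable (fun f : Fin (n+1) → ℝ =>
        (univ.filter (fun i => f i < f (Fin.last n))).card) := by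
      have heq : (fun f : Fin (n+1) → ℝ =>
          (univ.filter (fun i => f i < f (Fin.last n))).card)
          = fun f => ∑ i, if f i < f (Fin.last n) then 1 else 0 := by
        funext f; rw [Finset.card_filter]
      rw [heq]
      exact Finset.measurable_sum _ (fun i _ =>
        Measurable.ite (measurableSet_lt (measurable_pi_apply i)
          (measurable_pi_apply (Fin.last n))) measurable_const measurable_const)
    exact hcm measurableSet_Iio
  have key : ∀ j, P (A j) = P (A (Fin.last n)) := by
    intro j
    set σ := Equiv.swap j (Fin.last n) with hσ
    have hGmeas : Measurable (fun ω => fun i => E (σ i) ω) :=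
      measurable_pi_lambda _ (fun i => hmeas (σ i))
    have hcardeq : ∀ ω, (univ.filter (fun i => E (σ i) ω < E (σ (Fin.last n)) ω)).card
        = (univ.filter (fun i => E i ω < E j ω)).card := by
      intro ω
      rw [show σ (Fin.last n) = j from Equiv.swap_apply_right j (Fin.last n)]
      exact card_filter_comp_equiv σ (fun i => E i ω < E j ω)
    have hpre1 : (fun ω => fun i => E (σ i) ω) ⁻¹' B = A j := by
      ext ω
      simp only [Set.mem_preimage, hB, Set.mem_setOf_eq, hA]
      rw [hcardeq ω]
    have hpre2 : (fun ω => fun i => E i ω) ⁻¹' B = A (Fin.last n) := rfl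
    calc P (A j) = P ((fun ω => fun i => E (σ i) ω) ⁻¹' B) := by rw [hpre1]
      _ = Measure.map (fun ω => fun i => E (σ i) ω) P B :=
          (Measure.map_apply hGmeas hBmeas).symm
      _ = Measure.map (fun ω => fun i => E i ω) P B := by rw [hexch σ]
      _ = P ((fun ω => fun i => E i ω) ⁻¹' B) := Measure.map_apply hFmeas hBmeas
      _ = P (A (Fin.last n)) := by rw [hpre2]
  have hcount : ∀ ω, (r : ℝ≥0∞) ≤ ∑ j, (A j).indicator (fun _ => (1:ℝ≥0∞)) ω := by
    intro ω
    have h1 : ∑ j, (A j).indicator (fun _ => (1:ℝ≥0∞)) ω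
        = ((univ.filter (fun j => ω ∈ A j)).card : ℝ≥0∞) := by
      rw [Finset.card_filter]
      push_cast
      refine Finset.sum_congr rfl fun j _ => ?_
      by_cases hj : ω ∈ A j <;> simp [Set.indicator_apply, hj]
    rw [h1]
    have hset : (univ.filter (fun j => ω ∈ A j))
        = (univ.filter (fun j =>
            (univ.filter (fun i => E i ω < E j ω)).card < r)) := by
      refine Finset.filter_congr fun j _ => ?_
      simp [hAmem j ω]
    rw [hset]
    exact_mod_cast rank_count hr1 hrm (fun i => E i ω)
  have hsum : (r : ℝ≥0∞) ≤ ∑ j, P (A j) := by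
    calc (r : ℝ≥0∞) = ∫⁻ _, (r : ℝ≥0∞) ∂P := by simp
      _ ≤ ∫⁻ ω, ∑ j, (A j).indicator (fun _ => (1:ℝ≥0∞)) ω ∂P := lintegral_mono hcount
      _ = ∑ j, ∫⁻ ω, (A j).indicator (fun _ => (1:ℝ≥0∞)) ω ∂P :=
          lintegral_finset_sum _ (fun j _ => measurable_const.indicator (hAmeas j))
      _ = ∑ j, P (A j) := by
          refine Finset.sum_congr rfl fun j _ => ?_
          rw [lintegral_indicator (hAmeas j)]
          simp
  have htot : ∑ j, P (A j) = ((n+1:ℕ) : ℝ≥0∞) * P (A (Fin.last n)) := by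
    rw [Finset.sum_congr rfl (fun j _ => key j), Finset.sum_const, card_univ,
      Fintype.card_fin, nsmul_eq_mul]
  have hfin : (r : ℝ≥0∞) ≤ ((n+1:ℕ) : ℝ≥0∞) * P (A (Fin.last n)) := htot ▸ hsum
  have hNne : ((n+1:ℕ) : ℝ≥0∞) ≠ 0 := by simp
  have hNnt : ((n+1:ℕ) : ℝ≥0∞) ≠ ⊤ := by simp
  have hP : (r : ℝ≥0∞) / ((n+1:ℕ):ℝ≥0∞) ≤ P (A (Fin.last n)) :=
    ENNReal.div_le_of_le_mul' hfin
  have hofr : ENNReal.ofReal (1 - α) * ((n+1:ℕ):ℝ≥0∞) ≤ (r : ℝ≥0∞) := by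
    have hle : (1 - α) * ((n:ℝ) + 1) ≤ (r:ℝ) := by
      rw [hr]
      have := Nat.le_ceil ((1 - α) * ((n:ℝ) + 1))
      push_cast at this ⊢
      linarith
    calc ENNReal.ofReal (1 - α) * ((n+1:ℕ):ℝ≥0∞)
        = ENNReal.ofReal ((1 - α) * ((n:ℝ)+1)) := by
          rw [ENNReal.ofReal_mul hα1']
          congr 1
          rw [← ENNReal.ofReal_natCast (n+1)]
          push_cast
          ring_nf
      _ ≤ ENNReal.ofReal (r:ℝ) := ENNReal.ofReal_le_ofReal hle
      _ = (r : ℝ≥0∞) := ENNReal.ofReal_natCast r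
  have hle2 : ENNReal.ofReal (1-α) ≤ (r : ℝ≥0∞) / ((n+1:ℕ):ℝ≥0∞) :=
    (ENNReal.le_div_iff_mul_le (Or.inl hNne) (Or.inl hNnt)).mpr hofr
  have hev : {ω | E (Fin.last n) ω ≤ τ ω} = A (Fin.last n) := by
    ext ω
    simp only [Set.mem_setOf_eq, hτ ω, hA]
    rw [le_orderStat_iff hr1 hrn]
    have hcards : (univ.filter (fun i : Fin n =>
          E i.castSucc ω < E (Fin.last n) ω)).card
        = (univ.filter (fun i : Fin (n+1) => E i ω < E (Fin.last n) ω)).card := by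
      rw [Finset.card_filter, Finset.card_filter, Fin.sum_univ_castSucc]
      simp
    rw [hcards]
  rw [hev]
  exact le_trans hle2 hP
end

section
/- For i.i.d. (or exchangeable) scores, the conformal p-value p = (|{i ∈ {1,…,n} : Eᵢ ≥ E_{n+1}}| + 1)/(n+1) satisfies P(p ≤ α) ≤ α for every α ∈ [0,1]; equivalently P(p > α) ≥ 1 - α. -/
open MeasureTheory
open scoped ENNReal

private noncomputable def cnt (n : ℕ) (j : Fin (n+1)) (x : Fin (n+1) → ℝ) : ℕ :=
  (Finset.univ.filter (fun i => i ≠ j ∧ x j ≤ x i)).card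

private lemma cnt_perm (n : ℕ) (σ : Equiv.Perm (Fin (n+1))) (j : Fin (n+1))
    (x : Fin (n+1) → ℝ) : cnt n (σ j) x = cnt n j (fun i => x (σ i)) := by
  unfold cnt
  refine Finset.card_bij' (fun a _ => σ.symm a) (fun a _ => σ a) ?_ ?_ ?_ ?_
  · intro a ha
    simp only [Finset.mem_filter, Finset.mem_univ, true_and, Equiv.apply_symm_apply] at ha ⊢
    exact ⟨fun h => ha.1 (by rw [← h]; simp), ha.2⟩
  · intro a ha
    simp only [Finset.mem_filter, Finset.mem_univ, true_and] at ha ⊢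
    exact ⟨fun h => ha.1 (σ.injective h), ha.2⟩
  · intro a _; simp
  · intro a _; simp

private lemma cnt_card_le (n k : ℕ) (x : Fin (n+1) → ℝ) :
    (Finset.univ.filter (fun j => cnt n j x + 1 ≤ k)).card ≤ k := by
  by_contra h
  push_neg at h
  set S := Finset.univ.filter (fun j => cnt n j x + 1 ≤ k) with hS
  have hne : S.Nonempty := Finset.card_pos.mp (by omega)
  obtain ⟨j₀, hj₀, hmin⟩ := S.exists_min_image x hne
  have hj₀' : cnt n j₀ x + 1 ≤ k := (Finset.mem_filter.mp hj₀).2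
  have hsub : S.erase j₀ ⊆ Finset.univ.filter (fun i => i ≠ j₀ ∧ x j₀ ≤ x i) := by
    intro a ha
    simp only [Finset.mem_erase] at ha
    exact Finset.mem_filter.mpr ⟨Finset.mem_univ a, ha.1, hmin a ha.2⟩
  have h1 : S.card - 1 ≤ cnt n j₀ x := by
    have := Finset.card_le_card hsub
    rw [Finset.card_erase_of_mem hj₀] at this
    exact this
  omega

private lemma cnt_last (n : ℕ) (x : Fin (n+1) → ℝ) :
    cnt n (Fin.last n) x
      = (Finset.univ.filter (fun i : Fin n => x (Fin.last n) ≤ x i.castSucc)).card := by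
  unfold cnt
  refine Finset.card_bij' (fun a ha => a.castPred ?_) (fun a _ => a.castSucc) ?_ ?_ ?_ ?_
  · exact (Finset.mem_filter.mp ha).2.1
  · intro a ha
    simp only [Finset.mem_filter, Finset.mem_univ, true_and] at ha ⊢
    simpa using ha.2
  · intro a ha
    simp only [Finset.mem_filter, Finset.mem_univ, true_and] at ha ⊢
    exact ⟨(Fin.castSucc_lt_last a).ne, ha⟩
  · intro a _; simp
  · intro a _; simp

private lemma cnt_meas {Ω : Type*} [MeasurableSpace Ω] (n : ℕ) (E : Fin (n+1) → Ω → ℝ)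
    (hmeas : ∀ i, Measurable (E i)) (j : Fin (n+1)) :
    Measurable (fun ω => cnt n j (fun i => E i ω)) := by
  unfold cnt
  simp only [Finset.card_filter]
  apply Finset.measurable_sum
  intro i _
  by_cases hij : i = j
  · simp [hij]
  · have : (fun ω => if i ≠ j ∧ E j ω ≤ E i ω then (1:ℕ) else 0)
        = fun ω => if E j ω ≤ E i ω then (1:ℕ) else 0 := by
      funext ω; simp [hij]
    rw [this]
    exact Measurable.ite (measurableSet_le (hmeas j) (hmeas i)) measurable_const
      measurable_const

private lemma cnt_meas_pi (n : ℕ) (j : Fin (n+1)) :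
    Measurable (fun x : Fin (n+1) → ℝ => cnt n j x) :=
  cnt_meas n (fun i (x : Fin (n+1) → ℝ) => x i) (fun i => measurable_pi_apply i) j

/-- validity of conformal p-values.  For exchangeable scores
`E 0, …, E n`, the p-value `p = (1 + #{i ≤ n : Eᵢ ≥ E_{n+1}})/(n+1)` satisfies
`P(p ≤ α) ≤ α` for every `α ∈ [0,1]`. -/
theorem conformal_pvalue_valid {Ω : Type*} [MeasurableSpace Ω]
    (P : Measure Ω) [IsProbabilityMeasure P]
    (n : ℕ) (E : Fin (n + 1) → Ω → ℝ) (hmeas : ∀ i, Measurable (E i))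
    (hexch : ∀ σ : Equiv.Perm (Fin (n + 1)),
      Measure.map (fun ω => fun i => E (σ i) ω) P = Measure.map (fun ω => fun i => E i ω) P)
    (p : Ω → ℝ)
    (hp : ∀ ω, p ω =
      ((Finset.univ.filter (fun i : Fin n => E (Fin.last n) ω ≤ E i.castSucc ω)).card + 1)
        / (n + 1)) :
    ∀ α : ℝ, α ∈ Set.Icc (0 : ℝ) 1 → P {ω | p ω ≤ α} ≤ ENNReal.ofReal α := by
  intro α hα
  obtain ⟨hα0, hα1⟩ := hα
  set k : ℕ := ⌊((n:ℝ) + 1) * α⌋₊ with hk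
  set A : Fin (n+1) → Set Ω := fun j => {ω | cnt n j (fun i => E i ω) + 1 ≤ k} with hA
  have hAmeas : ∀ j, MeasurableSet (A j) := fun j =>
    measurableSet_le (Measurable.add (cnt_meas n E hmeas j) measurable_const) measurable_const
  have hset : {ω | p ω ≤ α} = A (Fin.last n) := by
    ext ω
    simp only [hA, Set.mem_setOf_eq, hp ω, cnt_last n (fun i => E i ω)]
    rw [div_le_iff₀ (by positivity), hk, Nat.le_floor_iff (by positivity)]
    push_cast
    constructor
    · intro h; linarith
    · intro h; linarith
  have hsame : ∀ j, P (A j) = P (A (Fin.last n)) := by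
    intro j
    set σ : Equiv.Perm (Fin (n+1)) := Equiv.swap (Fin.last n) j with hσ
    have hσl : σ (Fin.last n) = j := Equiv.swap_apply_left _ _
    set B : Set (Fin (n+1) → ℝ) := {x | cnt n (Fin.last n) x + 1 ≤ k} with hB
    have hBmeas : MeasurableSet B :=
      measurableSet_le (Measurable.add (cnt_meas_pi n _) measurable_const) measurable_const
    have hm1 : Measurable (fun ω => fun i => E (σ i) ω) :=
      measurable_pi_lambda _ (fun i => hmeas (σ i))
    have hm2 : Measurable (fun ω => fun i => E i ω) :=
      measurable_pi_lambda _ (fun i => hmeas i)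
    have e1 : A j = (fun ω => fun i => E (σ i) ω) ⁻¹' B := by
      ext ω
      simp only [hA, hB, Set.mem_setOf_eq, Set.mem_preimage]
      rw [← cnt_perm n σ (Fin.last n) (fun i => E i ω), hσl]
    have e2 : A (Fin.last n) = (fun ω => fun i => E i ω) ⁻¹' B := rfl
    rw [e1, e2, ← Measure.map_apply hm1 hBmeas, ← Measure.map_apply hm2 hBmeas, hexch σ]
  have hsum : ∑ j : Fin (n+1), P (A j) ≤ (k : ℝ≥0∞) := by
    calc ∑ j : Fin (n+1), P (A j)
        = ∑ j : Fin (n+1), ∫⁻ ω, (A j).indicator 1 ω ∂P :=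
          Finset.sum_congr rfl (fun j _ => (lintegral_indicator_one (hAmeas j)).symm)
      _ = ∫⁻ ω, ∑ j : Fin (n+1), (A j).indicator 1 ω ∂P := by
          rw [lintegral_finset_sum]
          exact fun j _ => (measurable_one.indicator (hAmeas j))
      _ ≤ ∫⁻ ω, (k : ℝ≥0∞) ∂P := by
          apply lintegral_mono
          intro ω
          have heq : ∑ j : Fin (n+1), (A j).indicator (1 : Ω → ℝ≥0∞) ω
              = ((Finset.univ.filter (fun j : Fin (n+1) =>
                  cnt n j (fun i => E i ω) + 1 ≤ k)).card : ℝ≥0∞) := by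
            rw [Finset.card_filter]
            push_cast
            refine Finset.sum_congr rfl (fun j _ => ?_)
            by_cases hj : cnt n j (fun i => E i ω) + 1 ≤ k
            · have hj' : ω ∈ A j := hj
              simp [Set.indicator_of_mem hj', hj]
            · have hj' : ω ∉ A j := hj
              simp [Set.indicator_of_notMem hj', hj]
          show ∑ j : Fin (n+1), (A j).indicator 1 ω ≤ (k : ℝ≥0∞)
          rw [heq]
          exact_mod_cast Nat.cast_le.mpr (cnt_card_le n k (fun i => E i ω))
      _ = (k : ℝ≥0∞) := by simp
  have hconst : ∑ j : Fin (n+1), P (A j) = ((n:ℝ≥0∞) + 1) * P (A (Fin.last n)) := by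
    rw [Finset.sum_congr rfl (fun j _ => hsame j), Finset.sum_const, Finset.card_univ,
      Fintype.card_fin, nsmul_eq_mul]
    push_cast
    ring
  rw [hset]
  have hkle : (k : ℝ≥0∞) ≤ ((n:ℝ≥0∞) + 1) * ENNReal.ofReal α := by
    have h1 : (k : ℝ) ≤ ((n:ℝ) + 1) * α := Nat.floor_le (by positivity)
    calc (k : ℝ≥0∞) = ENNReal.ofReal (k : ℝ) := by simp
      _ ≤ ENNReal.ofReal (((n:ℝ) + 1) * α) := ENNReal.ofReal_le_ofReal h1
      _ = ENNReal.ofReal ((n:ℝ) + 1) * ENNReal.ofReal α := ENNReal.ofReal_mul (by positivity)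
      _ = ((n:ℝ≥0∞) + 1) * ENNReal.ofReal α := by
          rw [ENNReal.ofReal_add (by positivity) zero_le_one]
          simp
  have hmain : ((n:ℝ≥0∞) + 1) * P (A (Fin.last n)) ≤ ((n:ℝ≥0∞) + 1) * ENNReal.ofReal α :=
    le_trans (hconst ▸ hsum) hkle
  have hne : ((n:ℝ≥0∞) + 1) ≠ 0 := by simp
  have hnt : ((n:ℝ≥0∞) + 1) ≠ ⊤ := by
    simp [ENNReal.add_ne_top]
  exact (ENNReal.mul_le_mul_iff_right hne hnt).mp hmain
end
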